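/- For a stationary random field Y indexed by ℤ^d, define D_min^(n) = E_{P_n}[ess inf_{Y_{C(n)}∼Q_n} ρ_n(X_{C(n)},Y_{C(n)})], where C(n) is the cube of side n. Then the sequence n^d · D_min^(n) is nondecreasing, D_min^(nk) ≥ D_min^(k) for all n,k ≥ 1, and lim_{n→∞} D_min^(n) = sup_{n≥1} D_min^(n). -/

import Mathlib

set_option maxHeartbeats 1000000
set_option linter.unusedSectionVars false
set_option linter.unusedVariables false

open MeasureTheory Real Filter


section helpers
variable {Ω : Type*} [MeasurableSpace Ω] {μ : Measure Ω} [IsProbabilityMeasure μ]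

lemma aux_mem_sSupSet {f : Ω → ℝ} {c : ℝ} (h : ∀ᵐ y ∂μ, c ≤ f y) :
    μ {y | f y < c} = 0 := by
  have := h
  rw [ae_iff] at this
  simpa [not_le] using this

lemma aux_bddAbove {f : Ω → ℝ} {M : ℝ} (hM : ∀ y, f y ≤ M) :
    BddAbove {a : ℝ | μ {y | f y < a} = 0} := by
  refine ⟨M + 1, fun a ha => ?_⟩
  by_contra hc
  push_neg at hc
  have : {y | f y < a} = Set.univ := by
    ext y; simp only [Set.mem_setOf_eq, Set.mem_univ, iff_true]
    exact lt_of_le_of_lt (hM y) (by linarith)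
  simp only [Set.mem_setOf_eq, this, measure_univ] at ha
  exact one_ne_zero ha

lemma aux_nonempty {f : Ω → ℝ} (h0 : ∀ y, 0 ≤ f y) :
    ({a : ℝ | μ {y | f y < a} = 0}).Nonempty := by
  refine ⟨0, ?_⟩
  have : {y | f y < 0} = (∅ : Set Ω) := by
    ext y; simp [not_lt.mpr (h0 y)]
  simp [this]

lemma aux_le_essInf {f : Ω → ℝ} {c M : ℝ} (hM : ∀ y, f y ≤ M)
    (h : ∀ᵐ y ∂μ, c ≤ f y) : c ≤ essInf f μ := by
  rw [essInf_eq_sSup]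
  exact le_csSup (aux_bddAbove hM) (aux_mem_sSupSet h)

lemma aux_essInf_le {f : Ω → ℝ} {c : ℝ} (h0 : ∀ y, 0 ≤ f y) (hM : ∀ y, f y ≤ c) :
    essInf f μ ≤ c := by
  rw [essInf_eq_sSup]
  refine csSup_le (aux_nonempty h0) (fun a ha => ?_)
  by_contra hc
  push_neg at hc
  have : {y | f y < a} = Set.univ := by
    ext y; simp only [Set.mem_setOf_eq, Set.mem_univ, iff_true]
    exact lt_of_le_of_lt (hM y) hc
  simp only [Set.mem_setOf_eq, this, measure_univ] at ha
  exact one_ne_zero ha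

lemma aux_essInf_nonneg {f : Ω → ℝ} {M : ℝ} (h0 : ∀ y, 0 ≤ f y) (hM : ∀ y, f y ≤ M) :
    0 ≤ essInf f μ :=
  aux_le_essInf hM (Eventually.of_forall h0)

lemma aux_ae_essInf_le {f : Ω → ℝ} (h0 : ∀ y, 0 ≤ f y) :
    ∀ᵐ y ∂μ, essInf f μ ≤ f y :=
  ae_essInf_le ⟨0, eventually_map.mpr (Eventually.of_forall h0)⟩

lemma aux_essInf_mono {f g : Ω → ℝ} {M : ℝ} (h0 : ∀ y, 0 ≤ f y)
    (hM : ∀ y, g y ≤ M) (hfg : ∀ y, f y ≤ g y) : essInf f μ ≤ essInf g μ := by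
  refine aux_le_essInf hM ?_
  filter_upwards [aux_ae_essInf_le h0] with y hy
  exact hy.trans (hfg y)

end helpers

section helpers2
variable {Ω : Type*} [MeasurableSpace Ω] {μ : Measure Ω} [IsProbabilityMeasure μ]

lemma aux_essInf_add {f g : Ω → ℝ} {Mf Mg : ℝ} (hf0 : ∀ y, 0 ≤ f y) (hfM : ∀ y, f y ≤ Mf)
    (hg0 : ∀ y, 0 ≤ g y) (hgM : ∀ y, g y ≤ Mg) :
    essInf f μ + essInf g μ ≤ essInf (fun y => f y + g y) μ := by
  refine aux_le_essInf (M := Mf + Mg) (fun y => add_le_add (hfM y) (hgM y)) ?_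
  filter_upwards [aux_ae_essInf_le hf0, aux_ae_essInf_le hg0] with y h1 h2
  exact add_le_add h1 h2

lemma aux_essInf_sum {ι : Type*} (s : Finset ι) (f : ι → Ω → ℝ) {M : ℝ}
    (h0 : ∀ i y, 0 ≤ f i y) (hM : ∀ i y, f i y ≤ M) :
    ∑ i ∈ s, essInf (f i) μ ≤ essInf (fun y => ∑ i ∈ s, f i y) μ := by
  classical
  induction s using Finset.induction with
  | empty =>
      simp only [Finset.sum_empty]
      rw [essInf_const (0 : ℝ) (IsProbabilityMeasure.ne_zero μ)]
  | insert a s hx ih =>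
      simp only [Finset.sum_insert hx]
      calc essInf (f a) μ + ∑ i ∈ s, essInf (f i) μ
          ≤ essInf (f a) μ + essInf (fun y => ∑ i ∈ s, f i y) μ := by linarith [ih]
        _ ≤ essInf (fun y => f a y + ∑ i ∈ s, f i y) μ :=
            aux_essInf_add (h0 a) (hM a) (fun y => Finset.sum_nonneg fun i _ => h0 i y)
              (Mg := s.card * M)
              (fun y => by
                calc ∑ i ∈ s, f i y ≤ ∑ _i ∈ s, M := Finset.sum_le_sum fun i _ => hM i y
                  _ = s.card * M := by rw [Finset.sum_const, nsmul_eq_mul])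

lemma aux_essInf_const_mul {f : Ω → ℝ} {c M : ℝ} (hc : 0 ≤ c) (h0 : ∀ y, 0 ≤ f y)
    (hM : ∀ y, f y ≤ M) : essInf (fun y => c * f y) μ = c * essInf f μ := by
  rcases eq_or_lt_of_le hc with h | h
  · simp only [← h, zero_mul]
    exact essInf_const (0 : ℝ) (IsProbabilityMeasure.ne_zero μ)
  · refine le_antisymm ?_ ?_
    · have h1 : c⁻¹ * essInf (fun y => c * f y) μ ≤ essInf f μ := by
        refine aux_le_essInf hM ?_
        filter_upwards [aux_ae_essInf_le (fun y => mul_nonneg hc (h0 y))] with y hy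
        rw [inv_mul_le_iff₀ h]
        exact hy
      calc essInf (fun y => c * f y) μ = c * (c⁻¹ * essInf (fun y => c * f y) μ) := by
            field_simp
        _ ≤ c * essInf f μ := by
            exact mul_le_mul_of_nonneg_left h1 hc
    · refine aux_le_essInf (M := c * M) (fun y => mul_le_mul_of_nonneg_left (hM y) hc) ?_
      filter_upwards [aux_ae_essInf_le h0] with y hy
      exact mul_le_mul_of_nonneg_left hy hc

lemma aux_essInf_comp {T : Ω → Ω} (hT : MeasurePreserving T μ μ) {g : Ω → ℝ}
    (hg : Measurable g) : essInf (fun y => g (T y)) μ = essInf g μ := by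
  rw [essInf_eq_sSup, essInf_eq_sSup]
  congr 1
  ext a
  simp only [Set.mem_setOf_eq]
  have h1 : {y | g (T y) < a} = T ⁻¹' {y | g y < a} := rfl
  rw [h1, hT.measure_preimage (measurableSet_lt hg measurable_const).nullMeasurableSet]

lemma aux_measurable_essInf {X : Type*} [MeasurableSpace X] {F : X → Ω → ℝ}
    (hF : Measurable (Function.uncurry F)) {M : ℝ} (h0 : ∀ x y, 0 ≤ F x y)
    (hM : ∀ x y, F x y ≤ M) : Measurable (fun x => essInf (F x) μ) := by
  have hSF : SFinite μ := inferInstance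
  refine measurable_of_Ioi (fun c => ?_)
  have key : (fun x => essInf (F x) μ) ⁻¹' Set.Ioi c =
      ⋃ (q : ℚ) (_ : c < (q : ℝ)), {x | μ {y | F x y < (q : ℝ)} = 0} := by
    ext x
    simp only [Set.mem_preimage, Set.mem_Ioi, Set.mem_iUnion, Set.mem_setOf_eq]
    constructor
    · intro hx
      rw [essInf_eq_sSup] at hx
      obtain ⟨a, ha, hca⟩ := exists_lt_of_lt_csSup (aux_nonempty (h0 x)) hx
      obtain ⟨q, hq1, hq2⟩ := exists_rat_btwn hca
      exact ⟨q, hq1, measure_mono_null (fun y hy => lt_trans hy hq2) ha⟩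
    · rintro ⟨q, hq1, hq2⟩
      refine lt_of_lt_of_le hq1 ?_
      refine aux_le_essInf (hM x) ?_
      rw [ae_iff]
      simpa [not_le] using hq2
  rw [key]
  refine MeasurableSet.iUnion (fun q => MeasurableSet.iUnion (fun _ => ?_))
  have hs : MeasurableSet {p : X × Ω | F p.1 p.2 < (q : ℝ)} :=
    measurableSet_lt hF measurable_const
  have := measurable_measure_prodMk_left (ν := μ) hs
  exact this (measurableSet_singleton 0)

end helpers2

lemma aux_cube_decomp {d : ℕ} (n k : ℕ) (hn : 1 ≤ n) (hk : 1 ≤ k)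
    {M : Type*} [AddCommMonoid M] (g : (Fin d → ℤ) → M) :
    ∑ u ∈ Finset.Icc (fun _ => (1:ℤ)) (fun _ => ((n * k : ℕ) : ℤ)), g u =
    ∑ v ∈ Finset.Icc (fun _ => (0:ℤ)) (fun _ => ((n:ℤ) - 1)),
      ∑ r ∈ Finset.Icc (fun _ => (1:ℤ)) (fun _ => (k:ℤ)), g (fun i => r i + (k:ℤ) * v i) := by
  have hk0 : (0:ℤ) < (k:ℤ) := by exact_mod_cast hk
  have hkne : (k:ℤ) ≠ 0 := ne_of_gt hk0
  rw [← Finset.sum_product']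
  refine Finset.sum_nbij'
    (i := fun u => (fun i => (u i - 1) / (k:ℤ), fun i => (u i - 1) % (k:ℤ) + 1))
    (j := fun p => fun i => p.2 i + (k:ℤ) * p.1 i) ?_ ?_ ?_ ?_ ?_
  · intro u hu
    rw [Finset.mem_Icc, Pi.le_def, Pi.le_def] at hu
    obtain ⟨h1, h2⟩ := hu
    simp only [Finset.mem_product, Finset.mem_Icc, Pi.le_def]
    have hub : ∀ i, u i ≤ (n : ℤ) * (k : ℤ) := by
      intro i; have := h2 i; push_cast at this; exact this
    refine ⟨⟨fun i => Int.ediv_nonneg (by linarith [h1 i]) (le_of_lt hk0), fun i => ?_⟩,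
      ⟨fun i => ?_, fun i => ?_⟩⟩
    · have hlt : (u i - 1) / (k:ℤ) < n := by
        rw [Int.ediv_lt_iff_lt_mul hk0]
        linarith [hub i]
      linarith
    · have := Int.emod_nonneg (u i - 1) hkne
      linarith
    · have := Int.emod_lt_of_pos (u i - 1) hk0
      linarith
  · intro p hp
    simp only [Finset.mem_product, Finset.mem_Icc, Pi.le_def] at hp
    obtain ⟨⟨hv0, hv1⟩, hr0, hr1⟩ := hp
    rw [Finset.mem_Icc, Pi.le_def, Pi.le_def]
    constructor
    · intro i
      have := mul_nonneg (le_of_lt hk0) (hv0 i)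
      have := hr0 i
      linarith
    · intro i
      have h1 : (k:ℤ) * p.1 i ≤ (k:ℤ) * ((n:ℤ) - 1) :=
        mul_le_mul_of_nonneg_left (hv1 i) (le_of_lt hk0)
      have := hr1 i
      push_cast
      linarith
  · intro u hu
    funext i
    have := Int.emod_add_mul_ediv (u i - 1) (k:ℤ)
    linarith
  · intro p hp
    simp only [Finset.mem_product, Finset.mem_Icc, Pi.le_def] at hp
    obtain ⟨⟨hv0, hv1⟩, hr0, hr1⟩ := hp
    have ha0 : ∀ i, 0 ≤ p.2 i - 1 := fun i => by linarith [hr0 i]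
    have hak : ∀ i, p.2 i - 1 < (k:ℤ) := fun i => by linarith [hr1 i]
    have key : ∀ i, p.2 i + (k:ℤ) * p.1 i - 1 = (p.2 i - 1) + (k:ℤ) * p.1 i := fun i => by ring
    refine Prod.ext ?_ ?_
    · funext i
      simp only [key i]
      rw [Int.add_mul_ediv_left _ _ hkne, Int.ediv_eq_zero_of_lt (ha0 i) (hak i)]
      ring
    · funext i
      simp only [key i]
      rw [Int.add_mul_emod_self_left, Int.emod_eq_of_lt (ha0 i) (hak i)]
      ring
  · intro u hu
    congr 1
    funext i
    have := Int.emod_add_mul_ediv (u i - 1) (k:ℤ)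
    linarith

/-- Random-field version: for stationary random fields on `ℤ^d` and bounded
nonnegative distortion, with `D_min^(n) = E_{P_n}[ess inf ρ_n]` over the cube
`C(n) = [1,n]^d`, the sequence `n^d · D_min^(n)` is nondecreasing,
`D_min^(nk) ≥ D_min^(k)` for `n, k ≥ 1`, and `D_min^(n) → sup_n D_min^(n)`. -/
theorem field_nDmin_monotone_and_tendsto_sup
    {A B : Type*} [MeasurableSpace A] [MeasurableSpace B] (d : ℕ) (hd : 1 ≤ d)
    (Pfield : Measure ((Fin d → ℤ) → A)) (Qfield : Measure ((Fin d → ℤ) → B))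
    [IsProbabilityMeasure Pfield] [IsProbabilityMeasure Qfield]
    (hPstat : ∀ v : Fin d → ℤ,
      MeasurePreserving (fun x : (Fin d → ℤ) → A => fun u => x (u + v)) Pfield Pfield)
    (hQstat : ∀ v : Fin d → ℤ,
      MeasurePreserving (fun y : (Fin d → ℤ) → B => fun u => y (u + v)) Qfield Qfield)
    (ρ : A → B → ℝ) (hρm : Measurable (Function.uncurry ρ)) (hρ0 : ∀ x y, 0 ≤ ρ x y)
    (C : ℝ) (hρC : ∀ x y, ρ x y ≤ C)
    (dmin : ℕ → ℝ)
    (hdmin : ∀ n : ℕ, dmin n = ∫ x, essInf (fun y : (Fin d → ℤ) → B =>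
        ((n : ℝ) ^ d)⁻¹ * ∑ u ∈ Finset.Icc (fun _ => (1 : ℤ)) (fun _ => (n : ℤ)),
          ρ (x u) (y u)) Qfield ∂Pfield) :
    Monotone (fun n : ℕ => (n : ℝ) ^ d * dmin n) ∧
    (∀ n k : ℕ, 1 ≤ n → 1 ≤ k → dmin k ≤ dmin (n * k)) ∧
    Tendsto dmin atTop (nhds (⨆ n : ℕ, dmin n)) := by
  classical
  have hdne : d ≠ 0 := by omega
  -- nonemptiness and 0 ≤ C
  have hAne : Nonempty ((Fin d → ℤ) → A) := by
    by_contra h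
    rw [not_nonempty_iff] at h
    have h1 : (Set.univ : Set ((Fin d → ℤ) → A)) = ∅ := Set.univ_eq_empty_iff.mpr h
    have h2 := measure_univ (μ := Pfield)
    rw [h1, measure_empty] at h2
    exact zero_ne_one h2
  have hBne : Nonempty ((Fin d → ℤ) → B) := by
    by_contra h
    rw [not_nonempty_iff] at h
    have h1 : (Set.univ : Set ((Fin d → ℤ) → B)) = ∅ := Set.univ_eq_empty_iff.mpr h
    have h2 := measure_univ (μ := Qfield)
    rw [h1, measure_empty] at h2
    exact zero_ne_one h2
  have hC0 : 0 ≤ C := by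
    obtain ⟨x0⟩ := hAne
    obtain ⟨y0⟩ := hBne
    exact le_trans (hρ0 (x0 0) (y0 0)) (hρC (x0 0) (y0 0))
  -- notation
  set Cc : ℕ → Finset (Fin d → ℤ) :=
    (fun n => Finset.Icc (fun _ => (1:ℤ)) (fun _ => (n:ℤ))) with hCc
  set S : ℕ → ((Fin d → ℤ) → A) → ((Fin d → ℤ) → B) → ℝ :=
    (fun n x y => ∑ u ∈ Cc n, ρ (x u) (y u)) with hS
  set H : ℕ → ((Fin d → ℤ) → A) → ℝ := (fun n x => essInf (S n x) Qfield) with hH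
  have hcard : ∀ n : ℕ, (Cc n).card = n ^ d := by
    intro n
    rw [hCc]
    rw [Pi.card_Icc]
    simp [Int.card_Icc]
  -- bounds on S
  have hS0 : ∀ n x y, 0 ≤ S n x y := fun n x y =>
    Finset.sum_nonneg fun u _ => hρ0 _ _
  have hSM : ∀ n x y, S n x y ≤ (n:ℝ)^d * C := by
    intro n x y
    calc S n x y ≤ (Cc n).card • C :=
          Finset.sum_le_card_nsmul _ _ _ (fun u _ => hρC _ _)
      _ = (n:ℝ)^d * C := by
          rw [nsmul_eq_mul, hcard n]
          push_cast
          ring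
  have hH0 : ∀ n x, 0 ≤ H n x := fun n x => aux_essInf_nonneg (hS0 n x) (hSM n x)
  have hHM : ∀ n x, H n x ≤ (n:ℝ)^d * C := fun n x => aux_essInf_le (hS0 n x) (hSM n x)
  -- measurability
  have hSmeas2 : ∀ n, Measurable (Function.uncurry (S n)) := by
    intro n
    have heq : Function.uncurry (S n) = fun p : ((Fin d → ℤ) → A) × ((Fin d → ℤ) → B) =>
        ∑ u ∈ Cc n, ρ (p.1 u) (p.2 u) := rfl
    rw [heq]
    refine Finset.measurable_sum _ (fun u _ => ?_)
    have h1 : Measurable (fun p : ((Fin d → ℤ) → A) × ((Fin d → ℤ) → B) => (p.1 u, p.2 u)) :=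
      ((measurable_pi_apply u).comp measurable_fst).prodMk
        ((measurable_pi_apply u).comp measurable_snd)
    exact hρm.comp h1
  have hSmeasy : ∀ n x, Measurable (S n x) :=
    fun n x => (hSmeas2 n).comp (measurable_const.prodMk measurable_id)
  have hHmeas : ∀ n, Measurable (H n) := fun n =>
    aux_measurable_essInf (hSmeas2 n) (hS0 n) (hSM n)
  have hIntBdd : ∀ (f : ((Fin d → ℤ) → A) → ℝ) (M : ℝ), Measurable f →
      (∀ x, 0 ≤ f x) → (∀ x, f x ≤ M) → Integrable f Pfield := by
    intro f M hm h0 hM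
    refine ⟨hm.aestronglyMeasurable, HasFiniteIntegral.of_bounded (C := M) ?_⟩
    filter_upwards with x
    rw [Real.norm_eq_abs, abs_of_nonneg (h0 x)]
    exact hM x
  have hHint : ∀ n, Integrable (H n) Pfield :=
    fun n => hIntBdd (H n) ((n:ℝ)^d * C) (hHmeas n) (hH0 n) (hHM n)
  -- dmin in terms of H
  have hdmin' : ∀ n, dmin n = ((n:ℝ)^d)⁻¹ * ∫ x, H n x ∂Pfield := by
    intro n
    have hpt : ∀ x : (Fin d → ℤ) → A, essInf (fun y : (Fin d → ℤ) → B =>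
        ((n : ℝ) ^ d)⁻¹ * ∑ u ∈ Finset.Icc (fun _ => (1 : ℤ)) (fun _ => (n : ℤ)),
          ρ (x u) (y u)) Qfield = ((n:ℝ)^d)⁻¹ * H n x := fun x =>
      aux_essInf_const_mul (inv_nonneg.mpr (by positivity)) (hS0 n x) (hSM n x)
    rw [hdmin n]
    simp only [hpt]
    rw [integral_const_mul]
  have hHzero : ∀ x, H 0 x = 0 := by
    intro x
    have hempty : Cc 0 = ∅ := by
      rw [hCc]
      refine Finset.Icc_eq_empty ?_
      intro hle
      have := hle ⟨0, hd⟩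
      norm_num at this
  -- hence S 0 x = const 0
    have : S 0 x = fun _ => (0:ℝ) := by
      funext y
      rw [hS]
      simp [hempty]
    show essInf (S 0 x) Qfield = 0
    rw [this, essInf_const (0:ℝ) (IsProbabilityMeasure.ne_zero Qfield)]
  have hdH : ∀ n : ℕ, (n:ℝ)^d * dmin n = ∫ x, H n x ∂Pfield := by
    intro n
    rcases Nat.eq_zero_or_pos n with h | h
    · subst h
      rw [show H 0 = (fun _ => (0:ℝ)) from funext hHzero]
      simp [zero_pow hdne]
    · rw [hdmin' n]
      have hnd : ((n:ℝ)^d) ≠ 0 := by positivity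
      field_simp
  -- Part 1: monotonicity
  have hmono : Monotone (fun n : ℕ => (n : ℝ) ^ d * dmin n) := by
    intro n m hnm
    simp only [hdH]
    refine integral_mono (hHint n) (hHint m) (fun x => ?_)
    refine aux_essInf_mono (hS0 n x) (hSM m x) (fun y => ?_)
    refine Finset.sum_le_sum_of_subset_of_nonneg ?_ (fun u _ _ => hρ0 _ _)
    rw [hCc]
    exact Finset.Icc_subset_Icc le_rfl (fun i => by change (n:ℤ) ≤ (m:ℤ); exact_mod_cast hnm)
  -- Part 2
  have hdiv : ∀ n k : ℕ, 1 ≤ n → 1 ≤ k → dmin k ≤ dmin (n * k) := by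
    intro n k hn hk
    -- shift maps
    set Box : Finset (Fin d → ℤ) :=
      Finset.Icc (fun _ => (0:ℤ)) (fun _ => (n:ℤ) - 1) with hBox
    have hcardBox : Box.card = n ^ d := by
      rw [hBox, Pi.card_Icc]
      simp [Int.card_Icc]
    set w : (Fin d → ℤ) → (Fin d → ℤ) := (fun v => fun i => (k:ℤ) * v i) with hw
    -- pointwise superadditivity
    have hcore : ∀ x, (∑ v ∈ Box, H k (fun u => x (u + w v))) ≤ H (n*k) x := by
      intro x
      have step1 : S (n*k) x = fun y =>
          ∑ v ∈ Box, S k (fun u => x (u + w v)) (fun u => y (u + w v)) := by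
        funext y
        rw [hS]
        simp only
        rw [hCc]
        rw [aux_cube_decomp n k hn hk (fun u => ρ (x u) (y u))]
        refine Finset.sum_congr rfl (fun v _ => ?_)
        refine Finset.sum_congr rfl (fun r _ => ?_)
        congr 1
      rw [hH]
      simp only
      rw [step1]
      calc ∑ v ∈ Box, H k (fun u => x (u + w v))
          = ∑ v ∈ Box, essInf (fun y => S k (fun u => x (u + w v))
              (fun u => y (u + w v))) Qfield := by
            refine Finset.sum_congr rfl (fun v _ => ?_)
            rw [hH]
            simp only
            rw [aux_essInf_comp (hQstat (w v)) (hSmeasy k _)]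
        _ ≤ essInf (fun y => ∑ v ∈ Box, S k (fun u => x (u + w v))
              (fun u => y (u + w v))) Qfield := by
            refine aux_essInf_sum Box _ (M := (k:ℝ)^d * C)
              (fun v y => hS0 k _ _) (fun v y => hSM k _ _)
    -- integrate
    have hshiftmeas : ∀ v : Fin d → ℤ,
        Measurable (fun x : (Fin d → ℤ) → A => fun u => x (u + v)) :=
      fun v => measurable_pi_lambda _ (fun u => measurable_pi_apply _)
    have hint2 : Integrable (fun x => ∑ v ∈ Box, H k (fun u => x (u + w v))) Pfield := by
      refine integrable_finset_sum _ (fun v _ => ?_)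
      exact hIntBdd _ ((k:ℝ)^d * C)
        ((hHmeas k).comp (hshiftmeas (w v))) (fun x => hH0 k _) (fun x => hHM k _)
    have hstep : ∫ x, (∑ v ∈ Box, H k (fun u => x (u + w v))) ∂Pfield
        ≤ ∫ x, H (n*k) x ∂Pfield :=
      integral_mono hint2 (hHint (n*k)) hcore
    have hsum : ∫ x, (∑ v ∈ Box, H k (fun u => x (u + w v))) ∂Pfield
        = (n:ℝ)^d * ∫ x, H k x ∂Pfield := by
      rw [integral_finset_sum Box
        (f := fun v => fun x : (Fin d → ℤ) → A => H k (fun u => x (u + w v)))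
        (fun v _ => hIntBdd _ ((k:ℝ)^d * C)
          ((hHmeas k).comp (hshiftmeas (w v))) (fun x => hH0 k _) (fun x => hHM k _))]
      have heach : ∀ v : Fin d → ℤ,
          ∫ x, H k (fun u => x (u + v)) ∂Pfield = ∫ x, H k x ∂Pfield := by
        intro v
        let e : ((Fin d → ℤ) → A) ≃ᵐ ((Fin d → ℤ) → A) :=
          { toFun := fun x => fun u => x (u + v)
            invFun := fun x => fun u => x (u - v)
            left_inv := fun x => by funext u; simp
            right_inv := fun x => by funext u; simp
            measurable_toFun := hshiftmeas v
            measurable_invFun := measurable_pi_lambda _ (fun u => measurable_pi_apply _) }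
        exact (hPstat v).integral_comp' (f := e) (H k)
      calc ∑ v ∈ Box, ∫ x, H k (fun u => x (u + w v)) ∂Pfield
          = ∑ v ∈ Box, ∫ x, H k x ∂Pfield :=
            Finset.sum_congr rfl (fun v _ => heach (w v))
        _ = (n:ℝ)^d * ∫ x, H k x ∂Pfield := by
            rw [Finset.sum_const, hcardBox, nsmul_eq_mul]
            push_cast
            ring
    -- conclude part 2
    have hfinal : ((n*k : ℕ):ℝ)^d * dmin k ≤ ((n*k : ℕ):ℝ)^d * dmin (n*k) := by
      rw [hdH (n*k)]
      calc ((n*k : ℕ):ℝ)^d * dmin k = (n:ℝ)^d * ((k:ℝ)^d * dmin k) := by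
            push_cast; ring
        _ = (n:ℝ)^d * ∫ x, H k x ∂Pfield := by rw [hdH k]
        _ = ∫ x, (∑ v ∈ Box, H k (fun u => x (u + w v))) ∂Pfield := hsum.symm
        _ ≤ ∫ x, H (n*k) x ∂Pfield := hstep
    have hpos : (0:ℝ) < ((n*k : ℕ):ℝ)^d := by
      have : (0:ℕ) < n * k := Nat.mul_pos hn hk
      positivity
    exact le_of_mul_le_mul_left hfinal hpos
  -- Part 3: convergence to the supremum
  have hd0 : ∀ n, 0 ≤ dmin n := by
    intro n
    rw [hdmin' n]
    exact mul_nonneg (inv_nonneg.mpr (by positivity)) (integral_nonneg (fun x => hH0 n x))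
  have hdminzero : dmin 0 = 0 := by
    rw [hdmin' 0]
    simp [zero_pow hdne]
  have hdC : ∀ n, dmin n ≤ C := by
    intro n
    rcases Nat.eq_zero_or_pos n with h | h
    · subst h
      rw [hdminzero]; exact hC0
    · have hnd : (0:ℝ) < (n:ℝ)^d := by
        have : (0:ℝ) < (n:ℝ) := by exact_mod_cast h
        positivity
      rw [hdmin' n, inv_mul_le_iff₀ hnd]
      calc ∫ x, H n x ∂Pfield ≤ ∫ _x, ((n:ℝ)^d * C) ∂Pfield :=
            integral_mono (hHint n) (integrable_const _) (fun x => hHM n x)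
        _ = (n:ℝ)^d * C := by simp
  have hbddA : BddAbove (Set.range dmin) := ⟨C, by rintro _ ⟨n, rfl⟩; exact hdC n⟩
  have hBle : IsBoundedUnder (· ≤ ·) atTop dmin := isBoundedUnder_of ⟨C, hdC⟩
  have hBge : IsBoundedUnder (· ≥ ·) atTop dmin := isBoundedUnder_of ⟨0, hd0⟩
  have hliminf : ∀ k : ℕ, dmin k ≤ liminf dmin atTop := by
    intro k
    rcases Nat.eq_zero_or_pos k with h | h
    · subst h
      rw [hdminzero]
      exact le_liminf_of_le hBle.isCoboundedUnder_ge (Eventually.of_forall hd0)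
    · have hφ : Tendsto (fun n : ℕ => (1 - (k:ℝ)/(n:ℝ))^d * dmin k) atTop (nhds (dmin k)) := by
        have t1 : Tendsto (fun n : ℕ => (k:ℝ)/(n:ℝ)) atTop (nhds 0) :=
          tendsto_const_div_atTop_nhds_zero_nat (k:ℝ)
        have t2 : Tendsto (fun n : ℕ => (1 - (k:ℝ)/(n:ℝ))^d) atTop (nhds 1) := by
          have h3 := ((tendsto_const_nhds (x := (1:ℝ)) (f := atTop)).sub t1).pow d
          simpa using h3
        have h4 := t2.mul_const (dmin k)
        simpa using h4
      have hev : ∀ᶠ n : ℕ in atTop, (1 - (k:ℝ)/(n:ℝ))^d * dmin k ≤ dmin n := by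
        rw [eventually_atTop]
        refine ⟨k, fun (n : ℕ) hn => ?_⟩
        set m := n / k with hm
        have hm1 : 1 ≤ m := (Nat.one_le_div_iff h).mpr hn
        have hmk : m * k ≤ n := Nat.div_mul_le_self n k
        have hmod := Nat.div_add_mod n k
        have hmodlt : n % k < k := Nat.mod_lt n h
        have hnpos : 0 < n := lt_of_lt_of_le h hn
        have hnR : (0:ℝ) < (n:ℝ) := by exact_mod_cast hnpos
        have hndR : (0:ℝ) < (n:ℝ)^d := by positivity
        have hA : ((m*k : ℕ):ℝ)^d * dmin (m*k) ≤ (n:ℝ)^d * dmin n := hmono hmk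
        have hB : dmin k ≤ dmin (m*k) := hdiv m k hm1 h
        have hq0 : (0:ℝ) ≤ 1 - (k:ℝ)/(n:ℝ) := by
          rw [sub_nonneg, div_le_one hnR]
          exact_mod_cast hn
        have hq1 : 1 - (k:ℝ)/(n:ℝ) ≤ ((m*k : ℕ):ℝ)/(n:ℝ) := by
          have hnmk : (n:ℝ) - (k:ℝ) ≤ ((m*k : ℕ):ℝ) := by
            have h5 : n ≤ m * k + k := by
              have h7 := Nat.add_le_add_left (Nat.le_of_lt hmodlt) (k * m)
              calc n = k * m + n % k := hmod.symm
                _ ≤ k * m + k := h7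
                _ = m * k + k := by ring
            have h6 : (n:ℝ) ≤ ((m*k : ℕ):ℝ) + (k:ℝ) := by exact_mod_cast h5
            linarith
          have heq : (1 : ℝ) - (k:ℝ)/(n:ℝ) = ((n:ℝ)-(k:ℝ))/(n:ℝ) := by field_simp
          rw [heq]
          exact (div_le_div_iff_of_pos_right hnR).mpr hnmk
        calc (1 - (k:ℝ)/(n:ℝ))^d * dmin k
            ≤ (((m*k : ℕ):ℝ)/(n:ℝ))^d * dmin k :=
              mul_le_mul_of_nonneg_right (pow_le_pow_left₀ hq0 hq1 d) (hd0 k)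
          _ ≤ (((m*k : ℕ):ℝ)/(n:ℝ))^d * dmin (m*k) := by
              refine mul_le_mul_of_nonneg_left hB ?_
              positivity
          _ = ((n:ℝ)^d)⁻¹ * (((m*k : ℕ):ℝ)^d * dmin (m*k)) := by
              rw [div_pow]; ring
          _ ≤ ((n:ℝ)^d)⁻¹ * ((n:ℝ)^d * dmin n) := by
              refine mul_le_mul_of_nonneg_left hA ?_
              positivity
          _ = dmin n := by
              field_simp
      have hlim1 : liminf (fun n : ℕ => (1 - (k:ℝ)/(n:ℝ))^d * dmin k) atTop = dmin k :=
        hφ.liminf_eq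
      rw [← hlim1]
      exact liminf_le_liminf hev hφ.isBoundedUnder_ge hBle.isCoboundedUnder_ge
  refine ⟨hmono, hdiv, ?_⟩
  have h1 : (⨆ n : ℕ, dmin n) ≤ liminf dmin atTop := ciSup_le hliminf
  have h2 : limsup dmin atTop ≤ ⨆ n : ℕ, dmin n :=
    limsup_le_of_le hBge.isCoboundedUnder_le
      (Eventually.of_forall (fun n => le_ciSup hbddA n))
  exact tendsto_of_le_liminf_of_limsup_le h1 h2 hBle hBge
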